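/- In the conversion model with download sizes, the read bandwidth cost satisfies γ_R ≥ λ · min{g^F, r} · α. -/

import Mathlib

open Finset

open scoped Classical in
/-- Probability that the random variable `X` takes the value `s`, under the
probability mass function `p` on the finite sample space `Ω`. -/
noncomputable def prEq {Ω : Type*} [Fintype Ω] {S : Type*} (p : Ω → ℝ) (X : Ω → S) (s : S) : ℝ :=
  ∑ ω, if X ω = s then p ω else 0

/-- Shannon entropy `H(X)` of the random variable `X` under the pmf `p`. -/
noncomputable def entropy {Ω : Type*} [Fintype Ω] {S : Type*} (p : Ω → ℝ) (X : Ω → S) : ℝ :=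
  -∑ ω, p ω * Real.log (prEq p X (X ω))

/-- Conditional entropy `H(X | Y) = H(X, Y) - H(Y)`. -/
noncomputable def condEntropy {Ω : Type*} [Fintype Ω] {S T : Type*}
    (p : Ω → ℝ) (X : Ω → S) (Y : Ω → T) : ℝ :=
  entropy p (fun ω => (X ω, Y ω)) - entropy p Y

/-- Conditional mutual information `I(X ; Y | Z) = H(X|Z) + H(Y|Z) - H(X,Y|Z)`. -/
noncomputable def condMI {Ω : Type*} [Fintype Ω] {S T U : Type*}
    (p : Ω → ℝ) (X : Ω → S) (Y : Ω → T) (Z : Ω → U) : ℝ :=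
  condEntropy p X Z + condEntropy p Y Z - condEntropy p (fun ω => (X ω, Y ω)) Z

/-- The tuple of random variables `(Z i)_{i ∈ A}`, as a single random variable. -/
def tupleOn {Ω : Type*} {ι : Type*} {S : ι → Type*}
    (Z : (i : ι) → Ω → S i) (A : Finset ι) (ω : Ω) :
    ∀ i : {x : ι // x ∈ A}, S i.1 := fun i => Z i.1 ω

open scoped Classical

section Lib
variable {Ω : Type*} [Fintype Ω] {S T U' : Type*} {p : Ω → ℝ}

lemma prEq_nonneg (hp0 : ∀ ω, 0 ≤ p ω) (X : Ω → S) (s : S) : 0 ≤ prEq p X s :=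
  Finset.sum_nonneg fun ω _ => by split <;> simp [hp0 ω]

lemma prEq_le_one (hp0 : ∀ ω, 0 ≤ p ω) (hp1 : ∑ ω, p ω = 1) (X : Ω → S) (s : S) :
    prEq p X s ≤ 1 := by
  rw [← hp1]
  exact Finset.sum_le_sum fun ω _ => by split <;> simp [hp0 ω]

lemma le_prEq (hp0 : ∀ ω, 0 ≤ p ω) (X : Ω → S) (ω : Ω) : p ω ≤ prEq p X (X ω) := by
  unfold prEq
  calc p ω = if X ω = X ω then p ω else 0 := by simp
  _ ≤ _ := Finset.single_le_sum (f := fun ω' => if X ω' = X ω then p ω' else 0)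
      (fun ω' _ => by split <;> simp [hp0 ω']) (mem_univ ω)

lemma prEq_pos (hp0 : ∀ ω, 0 ≤ p ω) (X : Ω → S) {ω : Ω} (hω : p ω ≠ 0) :
    0 < prEq p X (X ω) :=
  lt_of_lt_of_le (lt_of_le_of_ne (hp0 ω) (Ne.symm hω)) (le_prEq hp0 X ω)

lemma prEq_mono (hp0 : ∀ ω, 0 ≤ p ω) {X : Ω → S} {Y : Ω → T} {x : S} {y : T}
    (h : ∀ ω', X ω' = x → Y ω' = y) : prEq p X x ≤ prEq p Y y := by
  unfold prEq
  refine Finset.sum_le_sum fun ω' _ => ?_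
  by_cases hx : X ω' = x
  · rw [if_pos hx, if_pos (h ω' hx)]
  · rw [if_neg hx]; split <;> simp [hp0 ω']

lemma prEq_congr {X : Ω → S} {Y : Ω → T} {x : S} {y : T}
    (h : ∀ ω', X ω' = x ↔ Y ω' = y) : prEq p X x = prEq p Y y := by
  unfold prEq
  refine Finset.sum_congr rfl fun ω' _ => ?_
  by_cases hx : X ω' = x
  · rw [if_pos hx, if_pos ((h ω').1 hx)]
  · rw [if_neg hx, if_neg (fun hy => hx ((h ω').2 hy))]

lemma entropy_congr {X : Ω → S} {Y : Ω → T}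
    (h : ∀ ω ω', X ω' = X ω ↔ Y ω' = Y ω) : entropy p X = entropy p Y := by
  unfold entropy
  congr 1
  exact Finset.sum_congr rfl fun ω _ => by rw [prEq_congr (h ω)]

lemma entropy_nonneg (hp0 : ∀ ω, 0 ≤ p ω) (hp1 : ∑ ω, p ω = 1) (X : Ω → S) :
    0 ≤ entropy p X := by
  unfold entropy
  rw [neg_nonneg]
  refine Finset.sum_nonpos fun ω _ => ?_
  rcases eq_or_lt_of_le (hp0 ω) with h | h
  · simp [← h]
  · exact mul_nonpos_of_nonneg_of_nonpos h.le
      (Real.log_nonpos (prEq_nonneg hp0 X _) (prEq_le_one hp0 hp1 X _))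

/-- If `X` is determined by `Y` then `H(X) ≤ H(Y)`. -/
lemma entropy_le_of_det (hp0 : ∀ ω, 0 ≤ p ω) {X : Ω → S} {Y : Ω → T}
    (h : ∀ ω ω', Y ω' = Y ω → X ω' = X ω) : entropy p X ≤ entropy p Y := by
  unfold entropy
  rw [neg_le_neg_iff]
  refine Finset.sum_le_sum fun ω _ => ?_
  rcases eq_or_lt_of_le (hp0 ω) with hpω | hpω
  · simp [← hpω]
  · refine mul_le_mul_of_nonneg_left ?_ hpω.le
    exact Real.log_le_log (prEq_pos hp0 Y hpω.ne') (prEq_mono hp0 (h ω))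

lemma condEntropy_nonneg (hp0 : ∀ ω, 0 ≤ p ω) (X : Ω → S) (Y : Ω → T) :
    0 ≤ condEntropy p X Y := by
  rw [condEntropy, sub_nonneg]
  exact entropy_le_of_det hp0 fun ω ω' h => congrArg Prod.snd h

lemma condEntropy_eq_sum (X : Ω → S) (Y : Ω → T) :
    condEntropy p X Y = ∑ ω, p ω *
      (Real.log (prEq p Y (Y ω)) -
        Real.log (prEq p (fun ω => (X ω, Y ω)) (X ω, Y ω))) := by
  unfold condEntropy entropy
  rw [neg_sub_neg, ← Finset.sum_sub_distrib]
  exact Finset.sum_congr rfl fun ω _ => by ring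

end Lib
section Lib2
variable {Ω : Type*} [Fintype Ω] {S T U' : Type*} {p : Ω → ℝ}

/-- `X` is determined by `Y` almost everywhere. -/
def AEDet {Ω : Type*} {S T : Type*} (p : Ω → ℝ) (X : Ω → S) (Y : Ω → T) : Prop :=
  ∀ ω ω', p ω ≠ 0 → p ω' ≠ 0 → Y ω' = Y ω → X ω' = X ω

lemma condEntropy_term_nonneg (hp0 : ∀ ω, 0 ≤ p ω) (X : Ω → S) (Y : Ω → T) (ω : Ω) :
    0 ≤ p ω * (Real.log (prEq p Y (Y ω)) -
      Real.log (prEq p (fun ω => (X ω, Y ω)) (X ω, Y ω))) := by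
  rcases eq_or_lt_of_le (hp0 ω) with hpω | hpω
  · simp [← hpω]
  · refine mul_nonneg hpω.le (sub_nonneg.2 (Real.log_le_log ?_ ?_))
    · exact prEq_pos hp0 _ hpω.ne'
    · exact prEq_mono hp0 fun ω' h => congrArg Prod.snd h

lemma condEntropy_eq_zero_iff (hp0 : ∀ ω, 0 ≤ p ω) (X : Ω → S) (Y : Ω → T) :
    condEntropy p X Y = 0 ↔ AEDet p X Y := by
  rw [condEntropy_eq_sum]
  constructor
  · intro h0 ω ω' hω hω' hY
    have hterm := (Finset.sum_eq_zero_iff_of_nonneg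
      (fun ω _ => condEntropy_term_nonneg hp0 X Y ω)).1 h0 ω (mem_univ ω)
    have hpos : 0 < p ω := lt_of_le_of_ne (hp0 ω) (Ne.symm hω)
    have hlog : Real.log (prEq p Y (Y ω)) =
        Real.log (prEq p (fun ω => (X ω, Y ω)) (X ω, Y ω)) := by
      have := mul_eq_zero.1 hterm
      rcases this with h | h
      · exact absurd h hω
      · linarith [sub_eq_zero.1 h]
    have heq : prEq p Y (Y ω) = prEq p (fun ω => (X ω, Y ω)) (X ω, Y ω) :=
      Real.log_injOn_pos (Set.mem_Ioi.2 (prEq_pos hp0 Y hω))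
        (Set.mem_Ioi.2 (prEq_pos hp0 _ hω)) hlog
    -- difference of indicator sums is zero, termwise nonneg
    have hsum0 : ∑ ω'', ((if Y ω'' = Y ω then p ω'' else 0)
        - (if (X ω'', Y ω'') = (X ω, Y ω) then p ω'' else 0)) = 0 := by
      rw [Finset.sum_sub_distrib]
      have : prEq p Y (Y ω) - prEq p (fun ω => (X ω, Y ω)) (X ω, Y ω) = 0 := by
        rw [heq, sub_self]
      simpa [prEq] using this
    have htermwise := (Finset.sum_eq_zero_iff_of_nonneg (fun ω'' _ => ?_)).1 hsum0 ω' (mem_univ ω')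
    · by_contra hX
      rw [if_pos hY, if_neg (by simp [hX])] at htermwise
      simp at htermwise
      exact hω' htermwise
    · by_cases h1 : (X ω'', Y ω'') = (X ω, Y ω)
      · rw [if_pos h1, if_pos (congrArg Prod.snd h1), sub_self]
      · rw [if_neg h1]
        split <;> simp [hp0 ω'']
  · intro hdet
    refine Finset.sum_eq_zero fun ω _ => ?_
    by_cases hω : p ω = 0
    · simp [hω]
    · have : prEq p Y (Y ω) = prEq p (fun ω => (X ω, Y ω)) (X ω, Y ω) := by
        unfold prEq
        refine Finset.sum_congr rfl fun ω'' _ => ?_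
        by_cases hω'' : p ω'' = 0
        · split <;> split <;> simp [hω'']
        · by_cases hY : Y ω'' = Y ω
          · rw [if_pos hY, if_pos (Prod.ext (hdet ω ω'' hω hω'' hY) hY)]
          · rw [if_neg hY, if_neg (fun h => hY (congrArg Prod.snd h))]
      rw [this, sub_self, mul_zero]

end Lib2
section Lib3
variable {Ω : Type*} [Fintype Ω] {S T U' : Type*} {p : Ω → ℝ}

lemma sum_comp_eq_sum_image (X : Ω → S) (g : S → ℝ) :
    ∑ ω, p ω * g (X ω) = ∑ s ∈ univ.image X, prEq p X s * g s := by
  unfold prEq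
  simp only [Finset.sum_mul, ite_mul, zero_mul]
  rw [Finset.sum_comm]
  refine (Finset.sum_congr rfl fun ω _ => ?_).symm
  rw [Finset.sum_ite_eq (univ.image X) (X ω) (fun s => p ω * g s)]
  simp

lemma sum_prEq_image (hp1 : ∑ ω, p ω = 1) (X : Ω → S) :
    ∑ s ∈ univ.image X, prEq p X s = 1 := by
  unfold prEq
  rw [Finset.sum_comm, ← hp1]
  refine Finset.sum_congr rfl fun ω _ => ?_
  rw [Finset.sum_ite_eq (univ.image X) (X ω) (fun _ => p ω)]
  simp

lemma sum_div_prEq_le_one (hp0 : ∀ ω, 0 ≤ p ω) (Z : Ω → S) (h : S → ℝ)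
    (hh : ∀ s, 0 ≤ h s)
    (hsum : ∀ A : Finset S, (∀ s ∈ A, ∃ ω, Z ω = s) → ∑ s ∈ A, h s ≤ 1) :
    ∑ ω, p ω * (h (Z ω) / prEq p Z (Z ω)) ≤ 1 := by
  rw [sum_comp_eq_sum_image Z (fun s => h s / prEq p Z s)]
  refine le_trans (Finset.sum_le_sum (fun s _ => ?_)) (hsum _ ?_)
  · by_cases hq : prEq p Z s = 0
    · rw [hq, div_zero, mul_zero]; exact hh s
    · rw [div_eq_inv_mul, ← mul_assoc, mul_inv_cancel₀ hq, one_mul]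
  · intro s hs
    obtain ⟨ω, -, rfl⟩ := Finset.mem_image.1 hs
    exact ⟨ω, rfl⟩

lemma mutualInfo_nonneg (hp0 : ∀ ω, 0 ≤ p ω) (hp1 : ∑ ω, p ω = 1) (X : Ω → S) (Y : Ω → T) :
    entropy p (fun ω => (X ω, Y ω)) ≤ entropy p X + entropy p Y := by
  have key : ∑ ω, p ω *
      (prEq p X (X ω) * prEq p Y (Y ω) / prEq p (fun ω => (X ω, Y ω)) (X ω, Y ω)) ≤ 1 := by
    have h := sum_div_prEq_le_one (p := p) hp0 (fun ω => (X ω, Y ω))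
      (fun v => prEq p X v.1 * prEq p Y v.2)
      (fun v => mul_nonneg (prEq_nonneg hp0 X v.1) (prEq_nonneg hp0 Y v.2)) ?_
    · simpa using h
    · intro A hA
      have hsub : A ⊆ (univ.image X) ×ˢ (univ.image Y) := by
        intro v hv
        obtain ⟨ω, rfl⟩ := hA v hv
        exact Finset.mem_product.2 ⟨Finset.mem_image_of_mem _ (mem_univ ω),
          Finset.mem_image_of_mem _ (mem_univ ω)⟩
      refine le_trans (Finset.sum_le_sum_of_subset_of_nonneg hsub fun v _ _ =>
        mul_nonneg (prEq_nonneg hp0 X v.1) (prEq_nonneg hp0 Y v.2)) (le_of_eq ?_)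
      rw [Finset.sum_product, ← Finset.sum_mul_sum, sum_prEq_image hp1 X,
        sum_prEq_image hp1 Y, one_mul]
  have expand : entropy p X + entropy p Y - entropy p (fun ω => (X ω, Y ω))
      = ∑ ω, p ω * (Real.log (prEq p (fun ω => (X ω, Y ω)) (X ω, Y ω))
          - Real.log (prEq p X (X ω)) - Real.log (prEq p Y (Y ω))) := by
    have hr : ∑ ω, p ω * (Real.log (prEq p (fun ω => (X ω, Y ω)) (X ω, Y ω))
          - Real.log (prEq p X (X ω)) - Real.log (prEq p Y (Y ω)))
        = (∑ ω, p ω * Real.log (prEq p (fun ω => (X ω, Y ω)) (X ω, Y ω)))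
          - (∑ ω, p ω * Real.log (prEq p X (X ω)))
          - (∑ ω, p ω * Real.log (prEq p Y (Y ω))) := by
      rw [← Finset.sum_sub_distrib, ← Finset.sum_sub_distrib]
      exact Finset.sum_congr rfl fun ω _ => by ring
    rw [hr]
    simp only [entropy]
    ring
  have hterm : ∀ ω : Ω, p ω * (1 - prEq p X (X ω) * prEq p Y (Y ω)
        / prEq p (fun ω => (X ω, Y ω)) (X ω, Y ω))
      ≤ p ω * (Real.log (prEq p (fun ω => (X ω, Y ω)) (X ω, Y ω))
          - Real.log (prEq p X (X ω)) - Real.log (prEq p Y (Y ω))) := by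
    intro ω
    rcases eq_or_lt_of_le (hp0 ω) with hpω | hpω
    · simp [← hpω]
    · refine mul_le_mul_of_nonneg_left ?_ hpω.le
      have hqpos : 0 < prEq p (fun ω => (X ω, Y ω)) (X ω, Y ω) := prEq_pos hp0 _ hpω.ne'
      have hapos : 0 < prEq p X (X ω) := prEq_pos hp0 _ hpω.ne'
      have hbpos : 0 < prEq p Y (Y ω) := prEq_pos hp0 _ hpω.ne'
      have hx : 0 < prEq p X (X ω) * prEq p Y (Y ω)
          / prEq p (fun ω => (X ω, Y ω)) (X ω, Y ω) := by positivity
      have hlog := Real.log_le_sub_one_of_pos hx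
      rw [Real.log_div (by positivity) hqpos.ne', Real.log_mul hapos.ne' hbpos.ne'] at hlog
      linarith
  have hfinal : 1 - ∑ ω, p ω * (prEq p X (X ω) * prEq p Y (Y ω)
        / prEq p (fun ω => (X ω, Y ω)) (X ω, Y ω))
      ≤ entropy p X + entropy p Y - entropy p (fun ω => (X ω, Y ω)) := by
    rw [expand, ← hp1, ← Finset.sum_sub_distrib]
    refine Finset.sum_le_sum fun ω _ => ?_
    refine le_trans (le_of_eq (by ring)) (hterm ω)
  linarith

lemma condEntropy_le_entropy (hp0 : ∀ ω, 0 ≤ p ω) (hp1 : ∑ ω, p ω = 1)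
    (X : Ω → S) (Y : Ω → T) : condEntropy p X Y ≤ entropy p X := by
  have := mutualInfo_nonneg hp0 hp1 X Y
  rw [condEntropy]
  linarith

/-- Chain rule: `H(A,B | C) = H(B | C) + H(A | B,C)`. -/
lemma condEntropy_chain (A : Ω → S) (B : Ω → T) (C : Ω → U') :
    condEntropy p (fun ω => (A ω, B ω)) C
      = condEntropy p B C + condEntropy p A (fun ω => (B ω, C ω)) := by
  have hassoc : entropy p (fun ω => ((A ω, B ω), C ω))
      = entropy p (fun ω => (A ω, (B ω, C ω))) := by
    refine entropy_congr fun ω ω' => ?_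
    constructor <;> intro h <;>
      simpa [Prod.ext_iff, and_assoc] using h
  unfold condEntropy
  rw [hassoc]
  ring

end Lib3
section Lib4
variable {Ω : Type*} [Fintype Ω] {S T U' : Type*} {ι : Type*} {SS : ι → Type*} {p : Ω → ℝ}

lemma tupleOn_eq_iff (Z : (i : ι) → Ω → SS i) (A : Finset ι) (ω ω' : Ω) :
    tupleOn Z A ω' = tupleOn Z A ω ↔ ∀ i ∈ A, Z i ω' = Z i ω := by
  constructor
  · intro h i hi
    exact congrFun h ⟨i, hi⟩
  · intro h
    funext i
    exact h i.1 i.2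

lemma entropy_const (hp1 : ∑ ω, p ω = 1) {X : Ω → S} (h : ∀ ω ω', X ω' = X ω) :
    entropy p X = 0 := by
  unfold entropy
  have hpr : ∀ ω, prEq p X (X ω) = 1 := by
    intro ω
    unfold prEq
    rw [← hp1]
    exact Finset.sum_congr rfl fun ω' _ => if_pos (h ω ω')
  simp [hpr]

lemma entropy_tupleOn_le_sum (hp0 : ∀ ω, 0 ≤ p ω) (hp1 : ∑ ω, p ω = 1)
    (Z : (i : ι) → Ω → SS i) (A : Finset ι) :
    entropy p (tupleOn Z A) ≤ ∑ i ∈ A, entropy p (Z i) := by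
  classical
  induction A using Finset.induction with
  | empty =>
    rw [Finset.sum_empty, entropy_const hp1 (fun ω ω' => by
      funext i
      exact absurd i.2 (Finset.notMem_empty i.1))]
  | @insert a A ha ih =>
    have hc : entropy p (tupleOn Z (insert a A))
        = entropy p (fun ω => (Z a ω, tupleOn Z A ω)) := by
      refine entropy_congr fun ω ω' => ?_
      rw [tupleOn_eq_iff, Prod.ext_iff, tupleOn_eq_iff]
      constructor
      · intro h
        exact ⟨h a (Finset.mem_insert_self a A), fun i hi => h i (Finset.mem_insert_of_mem hi)⟩
      · intro h i hi
        rcases Finset.mem_insert.1 hi with rfl | hi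
        · exact h.1
        · exact h.2 i hi
    rw [hc, Finset.sum_insert ha]
    exact le_trans (mutualInfo_nonneg hp0 hp1 _ _) (by linarith)

lemma entropy_tupleOn_sdiff [Fintype ι] [DecidableEq ι] (Z : (i : ι) → Ω → SS i) (A : Finset ι) :
    entropy p (fun ω => (tupleOn Z A ω, tupleOn Z (univ \ A) ω))
      = entropy p (tupleOn Z univ) := by
  refine entropy_congr fun ω ω' => ?_
  rw [Prod.ext_iff, tupleOn_eq_iff, tupleOn_eq_iff, tupleOn_eq_iff]
  constructor
  · intro h i _
    by_cases hi : i ∈ A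
    · exact h.1 i hi
    · exact h.2 i (Finset.mem_sdiff.2 ⟨Finset.mem_univ i, hi⟩)
  · intro h
    exact ⟨fun i _ => h i (Finset.mem_univ i), fun i _ => h i (Finset.mem_univ i)⟩

lemma condEntropy_mono_left (hp0 : ∀ ω, 0 ≤ p ω) (A : Ω → S) (B : Ω → T) (C : Ω → U') :
    condEntropy p A C ≤ condEntropy p (fun ω => (A ω, B ω)) C := by
  unfold condEntropy
  refine sub_le_sub_right (entropy_le_of_det hp0 fun ω ω' h => ?_) _
  simp only [Prod.ext_iff] at h ⊢
  exact ⟨h.1.1, h.2⟩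

lemma fin_filter_lt_card {r m : ℕ} (hmr : m ≤ r) :
    ((univ : Finset (Fin r)).filter (fun j : Fin r => (j : ℕ) < m)).card = m := by
  classical
  refine Eq.trans (Finset.card_bij (t := Finset.range m)
    (fun (j : Fin r) _ => (j : ℕ)) ?_ ?_ ?_) (Finset.card_range m)
  · intro a ha
    exact Finset.mem_range.2 (Finset.mem_filter.1 ha).2
  · intro a _ b _ h
    exact Fin.val_injective h
  · intro b hb
    exact ⟨⟨b, lt_of_lt_of_le (Finset.mem_range.1 hb) hmr⟩,
      Finset.mem_filter.2 ⟨Finset.mem_univ _, Finset.mem_range.1 hb⟩, rfl⟩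

end Lib4

/- Conversion model (stable optimal-distance LRCC, global merge regime) with parameters
`(kI, gI, r, l; lam·kI, gF, r, l)`, `lam ≥ 2`, `μ = kI/r`, per-node capacity `α > 0`,
on a common finite probability space with pmf `p`.  Information nodes are indexed by
`Fin lam × Fin μ × Fin r` (initial codeword, local group, position), local parity nodes
by `Fin lam × Fin μ × Fin l`, initial global parity nodes by `Fin lam × Fin gI`, and
final global parity nodes by `Fin gF`.  The `X`'s are mutually independent, each with
entropy `α`; the local parities of each group are functions of the information nodes of
that group; the initial global parities of each initial codeword are functions of its
information nodes; the final global parities are functions of all information nodes; all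
nodes have entropy at most `α`.  The final code is optimal-distance: any `gF + l` of its
nodes are a function of the remaining ones.  The downloaded data `V x`, `U i`, `W a` are
functions of the corresponding stored data, and the final global parities are a function
of all the downloaded data (conversion coordinator property). -/

/-- In the conversion model with download sizes `β, σ, δ`
(`H(V x) ≤ β x ≤ α`, `H(U i) ≤ σ i ≤ α`, `H(W a) ≤ δ a ≤ α`), the read bandwidth cost
`γ_R = Σ β + Σ σ + Σ δ` satisfies `γ_R ≥ lam · min{gF, r} · α`. -/
theorem conversion_read_bandwidth_lower_bound
    {Ω : Type*} [Fintype Ω] {kI gI gF r l μ lam : ℕ}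
    {SX : Fin lam × Fin μ × Fin r → Type*}
    {SL : Fin lam × Fin μ × Fin l → Type*}
    {SGI : Fin lam × Fin gI → Type*}
    {SGF : Fin gF → Type*}
    {TV : Fin lam × Fin μ × Fin r → Type*}
    {TU : Fin lam × Fin gI → Type*}
    {TW : Fin lam × Fin μ × Fin l → Type*}
    (p : Ω → ℝ) (hp0 : ∀ ω, 0 ≤ p ω) (hp1 : ∑ ω, p ω = 1)
    (α : ℝ) (hα : 0 < α)
    (hr : 1 ≤ r) (hl : 1 ≤ l) (hμ : 1 ≤ μ) (hlam : 2 ≤ lam) (hk : kI = μ * r)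
    (X : (x : Fin lam × Fin μ × Fin r) → Ω → SX x)
    (L : (a : Fin lam × Fin μ × Fin l) → Ω → SL a)
    (GI : (i : Fin lam × Fin gI) → Ω → SGI i)
    (GF : (i : Fin gF) → Ω → SGF i)
    (V : (x : Fin lam × Fin μ × Fin r) → Ω → TV x)
    (U : (i : Fin lam × Fin gI) → Ω → TU i)
    (W : (a : Fin lam × Fin μ × Fin l) → Ω → TW a)
    (hXindep : entropy p (tupleOn X Finset.univ) = ∑ x, entropy p (X x))
    (hXα : ∀ x, entropy p (X x) = α)
    (hL : ∀ (t : Fin lam) (i : Fin μ),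
        condEntropy p (tupleOn L (Finset.univ.filter fun a => a.1 = t ∧ a.2.1 = i))
          (tupleOn X (Finset.univ.filter fun x => x.1 = t ∧ x.2.1 = i)) = 0)
    (hLcap : ∀ a, entropy p (L a) ≤ α)
    (hGI : ∀ t : Fin lam,
        condEntropy p (tupleOn GI (Finset.univ.filter fun i => i.1 = t))
          (tupleOn X (Finset.univ.filter fun x => x.1 = t)) = 0)
    (hGIcap : ∀ i, entropy p (GI i) ≤ α)
    (hGF : condEntropy p (tupleOn GF Finset.univ) (tupleOn X Finset.univ) = 0)
    (hGFcap : ∀ i, entropy p (GF i) ≤ α)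
    (hopt : ∀ (Q : Finset (Fin gF)) (R : Finset (Fin lam × Fin μ × Fin l))
        (S : Finset (Fin lam × Fin μ × Fin r)),
        Q.card + R.card + S.card ≤ gF + l →
        condEntropy p
          (fun ω => (tupleOn GF Q ω, tupleOn L R ω, tupleOn X S ω))
          (fun ω => (tupleOn GF (Finset.univ \ Q) ω, tupleOn L (Finset.univ \ R) ω,
            tupleOn X (Finset.univ \ S) ω)) = 0)
    (hV : ∀ x, condEntropy p (V x) (X x) = 0)
    (hU : ∀ i, condEntropy p (U i) (GI i) = 0)
    (hW : ∀ a, condEntropy p (W a) (L a) = 0)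
    (hcoord : condEntropy p (tupleOn GF Finset.univ)
        (fun ω => (tupleOn V Finset.univ ω, tupleOn U Finset.univ ω,
          tupleOn W Finset.univ ω)) = 0)
    (β : Fin lam × Fin μ × Fin r → ℝ) (σ : Fin lam × Fin gI → ℝ)
    (δ : Fin lam × Fin μ × Fin l → ℝ)
    (hβ : ∀ x, entropy p (V x) ≤ β x ∧ β x ≤ α)
    (hσ : ∀ i, entropy p (U i) ≤ σ i ∧ σ i ≤ α)
    (hδ : ∀ a, entropy p (W a) ≤ δ a ∧ δ a ≤ α)
    :
    (∑ x, β x) + (∑ i, σ i) + (∑ a, δ a)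
      ≥ (lam : ℝ) * ((min gF r : ℕ) : ℝ) * α := by
  classical
  set m := min gF r with hm
  have hmgF : m ≤ gF := Nat.min_le_left _ _
  have hmr : m ≤ r := Nat.min_le_right _ _
  have hμ0 : 0 < μ := hμ
  set g0 : Fin μ := ⟨0, hμ0⟩ with hg0
  -- per-codeword bound
  have key : ∀ t : Fin lam, (m : ℝ) * α ≤
      (∑ x ∈ univ.filter (fun x : Fin lam × Fin μ × Fin r => x.1 = t), β x)
      + (∑ i ∈ univ.filter (fun i : Fin lam × Fin gI => i.1 = t), σ i)
      + (∑ a ∈ univ.filter (fun a : Fin lam × Fin μ × Fin l => a.1 = t), δ a) := by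
    intro t
    set Sset : Finset (Fin lam × Fin μ × Fin r) :=
      univ.filter (fun x => x.1 = t ∧ x.2.1 = g0 ∧ (x.2.2 : ℕ) < m) with hSs
    set Rset : Finset (Fin lam × Fin μ × Fin l) :=
      univ.filter (fun a => a.1 = t ∧ a.2.1 = g0) with hRs
    have hcardS : Sset.card = m := by
      refine Eq.trans (Finset.card_bij
        (t := (univ : Finset (Fin r)).filter (fun j : Fin r => (j : ℕ) < m))
        (fun x _ => x.2.2) ?_ ?_ ?_) (fin_filter_lt_card hmr)
      · intro x hx
        exact Finset.mem_filter.2 ⟨Finset.mem_univ _, ((Finset.mem_filter.1 hx).2).2.2⟩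
      · intro x hx y hy hxy
        have hx' := (Finset.mem_filter.1 hx).2
        have hy' := (Finset.mem_filter.1 hy).2
        ext
        · rw [hx'.1, hy'.1]
        · rw [hx'.2.1, hy'.2.1]
        · exact congrArg Fin.val hxy
      · intro j hj
        refine ⟨(t, g0, j), Finset.mem_filter.2 ⟨Finset.mem_univ _,
          rfl, rfl, (Finset.mem_filter.1 hj).2⟩, rfl⟩
    have hcardR : Rset.card = l := by
      have : Rset.card = (univ : Finset (Fin l)).card := by
        refine Finset.card_bij (fun a _ => a.2.2) ?_ ?_ ?_
        · intro a _; exact Finset.mem_univ _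
        · intro x hx y hy hxy
          have hx' := (Finset.mem_filter.1 hx).2
          have hy' := (Finset.mem_filter.1 hy).2
          ext
          · rw [hx'.1, hy'.1]
          · rw [hx'.2, hy'.2]
          · exact congrArg Fin.val hxy
        · intro j _
          exact ⟨(t, g0, j), Finset.mem_filter.2 ⟨Finset.mem_univ _, rfl, rfl⟩, rfl⟩
      rw [this, Finset.card_univ, Fintype.card_fin]
    -- the lower bound via independence
    have hXSC : (m : ℝ) * α ≤
        condEntropy p (tupleOn X Sset) (tupleOn X (univ \ Sset)) := by
      have h1 : condEntropy p (tupleOn X Sset) (tupleOn X (univ \ Sset))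
          = entropy p (tupleOn X univ) - entropy p (tupleOn X (univ \ Sset)) := by
        rw [condEntropy, entropy_tupleOn_sdiff]
      have h2 : entropy p (tupleOn X (univ \ Sset)) ≤ ∑ x ∈ univ \ Sset, α :=
        le_trans (entropy_tupleOn_le_sum hp0 hp1 X _)
          (le_of_eq (Finset.sum_congr rfl fun x _ => hXα x))
      have h3 : entropy p (tupleOn X univ)
          = ∑ x ∈ (univ : Finset (Fin lam × Fin μ × Fin r)), α := by
        rw [hXindep]
        exact Finset.sum_congr rfl fun x _ => hXα x
      have h4 : ∑ x ∈ (univ : Finset (Fin lam × Fin μ × Fin r)), α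
          = (∑ x ∈ univ \ Sset, α) + (m : ℝ) * α := by
        rw [← Finset.sum_sdiff (Finset.subset_univ Sset)]
        congr 1
        rw [Finset.sum_const, hcardS, nsmul_eq_mul]
      rw [h1, h3, h4]
      linarith
    -- determinism: X_S is a.e. determined by (D_t, X_{univ \ S})
    have hzero : condEntropy p (tupleOn X Sset)
        (fun ω => ((tupleOn V (univ.filter fun x : Fin lam × Fin μ × Fin r => x.1 = t) ω,
            tupleOn U (univ.filter fun i : Fin lam × Fin gI => i.1 = t) ω,
            tupleOn W (univ.filter fun a : Fin lam × Fin μ × Fin l => a.1 = t) ω),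
          tupleOn X (univ \ Sset) ω)) = 0 := by
      rw [condEntropy_eq_zero_iff hp0]
      intro ω ω' hω hω' h
      have hD : (tupleOn V (univ.filter fun x : Fin lam × Fin μ × Fin r => x.1 = t) ω',
            tupleOn U (univ.filter fun i : Fin lam × Fin gI => i.1 = t) ω',
            tupleOn W (univ.filter fun a : Fin lam × Fin μ × Fin l => a.1 = t) ω')
          = (tupleOn V (univ.filter fun x : Fin lam × Fin μ × Fin r => x.1 = t) ω,
            tupleOn U (univ.filter fun i : Fin lam × Fin gI => i.1 = t) ω,
            tupleOn W (univ.filter fun a : Fin lam × Fin μ × Fin l => a.1 = t) ω) :=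
        congrArg Prod.fst h
      have hC : tupleOn X (univ \ Sset) ω' = tupleOn X (univ \ Sset) ω :=
        congrArg Prod.snd h
      have hVt := congrArg Prod.fst hD
      have hUt := congrArg (fun v => v.2.1) hD
      have hWt := congrArg (fun v => v.2.2) hD
      have hXc : ∀ x : Fin lam × Fin μ × Fin r,
          ¬(x.1 = t ∧ x.2.1 = g0 ∧ (x.2.2 : ℕ) < m) → X x ω' = X x ω := by
        intro x hx
        refine (tupleOn_eq_iff X (univ \ Sset) ω ω').1 hC x ?_
        exact Finset.mem_sdiff.2 ⟨Finset.mem_univ _,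
          fun hmem => hx (Finset.mem_filter.1 hmem).2⟩
      have hVall : ∀ x, V x ω' = V x ω := by
        intro x
        by_cases hx : x.1 = t
        · exact (tupleOn_eq_iff V _ ω ω').1 hVt x (Finset.mem_filter.2 ⟨Finset.mem_univ _, hx⟩)
        · exact (condEntropy_eq_zero_iff hp0 _ _).1 (hV x) ω ω' hω hω'
            (hXc x (fun hc => hx hc.1))
      have hUall : ∀ i, U i ω' = U i ω := by
        intro i
        by_cases hi : i.1 = t
        · exact (tupleOn_eq_iff U _ ω ω').1 hUt i (Finset.mem_filter.2 ⟨Finset.mem_univ _, hi⟩)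
        · refine (condEntropy_eq_zero_iff hp0 _ _).1 (hU i) ω ω' hω hω' ?_
          have hGIt := (condEntropy_eq_zero_iff hp0 _ _).1 (hGI i.1) ω ω' hω hω'
            ((tupleOn_eq_iff X _ ω ω').2 (fun x hx => hXc x
              (fun hc => hi (by rw [← (Finset.mem_filter.1 hx).2, hc.1]))))
          exact (tupleOn_eq_iff GI _ ω ω').1 hGIt i
            (Finset.mem_filter.2 ⟨Finset.mem_univ _, rfl⟩)
      have hLgrp : ∀ a : Fin lam × Fin μ × Fin l, ¬(a.1 = t ∧ a.2.1 = g0) →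
          L a ω' = L a ω := by
        intro a ha
        have hgrp := (condEntropy_eq_zero_iff hp0 _ _).1 (hL a.1 a.2.1) ω ω' hω hω'
          ((tupleOn_eq_iff X _ ω ω').2 (fun x hx => hXc x (fun hc => by
            have hx' := (Finset.mem_filter.1 hx).2
            exact ha ⟨by rw [← hx'.1, hc.1], by rw [← hx'.2, hc.2.1]⟩)))
        exact (tupleOn_eq_iff L _ ω ω').1 hgrp a
          (Finset.mem_filter.2 ⟨Finset.mem_univ _, rfl, rfl⟩)
      have hWall : ∀ a, W a ω' = W a ω := by
        intro a
        by_cases hat : a.1 = t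
        · exact (tupleOn_eq_iff W _ ω ω').1 hWt a (Finset.mem_filter.2 ⟨Finset.mem_univ _, hat⟩)
        · exact (condEntropy_eq_zero_iff hp0 _ _).1 (hW a) ω ω' hω hω'
            (hLgrp a (fun hc => hat hc.1))
      have hGFall : tupleOn GF univ ω' = tupleOn GF univ ω := by
        refine (condEntropy_eq_zero_iff hp0 _ _).1 hcoord ω ω' hω hω' ?_
        show (tupleOn V univ ω', tupleOn U univ ω', tupleOn W univ ω')
          = (tupleOn V univ ω, tupleOn U univ ω, tupleOn W univ ω)
        rw [(tupleOn_eq_iff V univ ω ω').2 (fun x _ => hVall x),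
          (tupleOn_eq_iff U univ ω ω').2 (fun i _ => hUall i),
          (tupleOn_eq_iff W univ ω ω').2 (fun a _ => hWall a)]
      have hcard : (∅ : Finset (Fin gF)).card + Rset.card + Sset.card ≤ gF + l := by
        rw [Finset.card_empty, hcardR, hcardS]
        omega
      have hoptdet := (condEntropy_eq_zero_iff hp0 _ _).1 (hopt ∅ Rset Sset hcard) ω ω' hω hω'
      have hcondeq : (tupleOn GF (univ \ ∅) ω', tupleOn L (univ \ Rset) ω',
            tupleOn X (univ \ Sset) ω')
          = (tupleOn GF (univ \ ∅) ω, tupleOn L (univ \ Rset) ω,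
            tupleOn X (univ \ Sset) ω) := by
        rw [(tupleOn_eq_iff GF (univ \ ∅) ω ω').2
            (fun i _ => (tupleOn_eq_iff GF univ ω ω').1 hGFall i (Finset.mem_univ i)),
          (tupleOn_eq_iff L (univ \ Rset) ω ω').2 (fun a ha => hLgrp a
            (fun hc => (Finset.mem_sdiff.1 ha).2
              (Finset.mem_filter.2 ⟨Finset.mem_univ _, hc⟩))),
          hC]
      exact congrArg (fun v => v.2.2) (hoptdet hcondeq)
    -- upper bound on the download entropy
    have hup : condEntropy p
        (fun ω => (tupleOn V (univ.filter fun x : Fin lam × Fin μ × Fin r => x.1 = t) ω,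
            tupleOn U (univ.filter fun i : Fin lam × Fin gI => i.1 = t) ω,
            tupleOn W (univ.filter fun a : Fin lam × Fin μ × Fin l => a.1 = t) ω))
        (tupleOn X (univ \ Sset)) ≤
        (∑ x ∈ univ.filter (fun x : Fin lam × Fin μ × Fin r => x.1 = t), β x)
        + (∑ i ∈ univ.filter (fun i : Fin lam × Fin gI => i.1 = t), σ i)
        + (∑ a ∈ univ.filter (fun a : Fin lam × Fin μ × Fin l => a.1 = t), δ a) := by
      refine le_trans (condEntropy_le_entropy hp0 hp1 _ _) ?_
      refine le_trans (mutualInfo_nonneg hp0 hp1 _ _) ?_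
      have hVb : entropy p (tupleOn V (univ.filter fun x : Fin lam × Fin μ × Fin r => x.1 = t))
          ≤ ∑ x ∈ univ.filter (fun x : Fin lam × Fin μ × Fin r => x.1 = t), β x :=
        le_trans (entropy_tupleOn_le_sum hp0 hp1 V _)
          (Finset.sum_le_sum fun x _ => (hβ x).1)
      have hUWb : entropy p (fun ω =>
          (tupleOn U (univ.filter fun i : Fin lam × Fin gI => i.1 = t) ω,
            tupleOn W (univ.filter fun a : Fin lam × Fin μ × Fin l => a.1 = t) ω))
          ≤ (∑ i ∈ univ.filter (fun i : Fin lam × Fin gI => i.1 = t), σ i)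
            + (∑ a ∈ univ.filter (fun a : Fin lam × Fin μ × Fin l => a.1 = t), δ a) := by
        refine le_trans (mutualInfo_nonneg hp0 hp1 _ _) ?_
        have h1 : entropy p (tupleOn U (univ.filter fun i : Fin lam × Fin gI => i.1 = t))
            ≤ ∑ i ∈ univ.filter (fun i : Fin lam × Fin gI => i.1 = t), σ i :=
          le_trans (entropy_tupleOn_le_sum hp0 hp1 U _)
            (Finset.sum_le_sum fun i _ => (hσ i).1)
        have h2 : entropy p (tupleOn W (univ.filter fun a : Fin lam × Fin μ × Fin l => a.1 = t))
            ≤ ∑ a ∈ univ.filter (fun a : Fin lam × Fin μ × Fin l => a.1 = t), δ a :=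
          le_trans (entropy_tupleOn_le_sum hp0 hp1 W _)
            (Finset.sum_le_sum fun a _ => (hδ a).1)
        linarith
      linarith
    -- assemble the chain
    have hmono := condEntropy_mono_left hp0 (tupleOn X Sset)
      (fun ω => (tupleOn V (univ.filter fun x : Fin lam × Fin μ × Fin r => x.1 = t) ω,
          tupleOn U (univ.filter fun i : Fin lam × Fin gI => i.1 = t) ω,
          tupleOn W (univ.filter fun a : Fin lam × Fin μ × Fin l => a.1 = t) ω))
      (tupleOn X (univ \ Sset))
    have hchain := condEntropy_chain (p := p) (tupleOn X Sset)
      (fun ω => (tupleOn V (univ.filter fun x : Fin lam × Fin μ × Fin r => x.1 = t) ω,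
          tupleOn U (univ.filter fun i : Fin lam × Fin gI => i.1 = t) ω,
          tupleOn W (univ.filter fun a : Fin lam × Fin μ × Fin l => a.1 = t) ω))
      (tupleOn X (univ \ Sset))
    linarith
  -- sum over codewords
  rw [ge_iff_le]
  have hsumβ := Finset.sum_fiberwise (univ : Finset (Fin lam × Fin μ × Fin r)) Prod.fst β
  have hsumσ := Finset.sum_fiberwise (univ : Finset (Fin lam × Fin gI)) Prod.fst σ
  have hsumδ := Finset.sum_fiberwise (univ : Finset (Fin lam × Fin μ × Fin l)) Prod.fst δ
  calc (lam : ℝ) * ((m : ℕ) : ℝ) * α = ∑ _t : Fin lam, (m : ℝ) * α := by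
        rw [Finset.sum_const, Finset.card_univ, Fintype.card_fin, nsmul_eq_mul]
        ring
    _ ≤ ∑ t : Fin lam,
        ((∑ x ∈ univ.filter (fun x : Fin lam × Fin μ × Fin r => x.1 = t), β x)
        + (∑ i ∈ univ.filter (fun i : Fin lam × Fin gI => i.1 = t), σ i)
        + (∑ a ∈ univ.filter (fun a : Fin lam × Fin μ × Fin l => a.1 = t), δ a)) :=
      Finset.sum_le_sum fun t _ => key t
    _ = (∑ x, β x) + (∑ i, σ i) + (∑ a, δ a) := by
      rw [Finset.sum_add_distrib, Finset.sum_add_distrib, hsumβ, hsumσ, hsumδ]
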